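/- arXiv:1510.01148 — 2 statements merged into one kernel-verified Lean document; each statement's English description precedes it below -/
import Mathlib

section
/- Let F = [f_ij] be a K×K symmetric strictly diagonally dominant matrix with positive diagonal, and let μ = max_i (1/f_ii)Σ_{j≠i}|f_ij| < 1. Then for each j, the diagonal entry of the inverse satisfies (F⁻¹)_jj ≤ 1/(f_jj(1 − μ)). -/
open Matrix Finset

def SDD {K : ℕ} (M : Matrix (Fin K) (Fin K) ℝ) : Prop :=
  ∀ i, ∑ j ∈ Finset.univ.erase i, |M i j| < |M i i|

theorem stmt10 {K : ℕ} (F : Matrix (Fin K) (Fin K) ℝ) (hsym : F.IsSymm)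
    (hsdd : SDD F) (hdiag : ∀ i, 0 < F i i)
    (μ : ℝ) (hμ : ∀ i, ∑ j ∈ Finset.univ.erase i, |F i j| ≤ μ * F i i)
    (hμ1 : μ < 1) :
    ∀ j, F⁻¹ j j ≤ 1 / (F j j * (1 - μ)) := by
  intro j
  have hden : 0 < F j j * (1 - μ) := mul_pos (hdiag j) (by linarith)
  by_cases hu : IsUnit F.det
  · set x : Fin K → ℝ := fun i => F⁻¹ i j with hx
    have hrow : ∀ i, ∑ k, F i k * x k = if i = j then 1 else 0 := by
      intro i
      have h2 : (F * F⁻¹) i j = (1 : Matrix (Fin K) (Fin K) ℝ) i j := by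
        rw [Matrix.mul_nonsing_inv F hu]
      simpa [Matrix.mul_apply, Matrix.one_apply] using h2
    obtain ⟨i0, -, hi0⟩ := Finset.exists_max_image Finset.univ (fun i => |x i|)
      ⟨j, Finset.mem_univ j⟩
    set m := |x i0| with hm
    have hm0 : 0 ≤ m := abs_nonneg _
    have hmax : ∀ k, |x k| ≤ m := fun k => hi0 k (Finset.mem_univ k)
    have hkey : ∀ i, i ≠ j → |x i| ≤ μ * m := by
      intro i hij
      have h1 : F i i * x i = - ∑ k ∈ Finset.univ.erase i, F i k * x k := by
        have h := hrow i
        rw [if_neg hij, ← Finset.add_sum_erase _ _ (Finset.mem_univ i)] at h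
        linarith
      have hchain : F i i * |x i| ≤ μ * F i i * m := by
        calc F i i * |x i| = |F i i * x i| := by
              rw [abs_mul, abs_of_pos (hdiag i)]
          _ = |∑ k ∈ Finset.univ.erase i, F i k * x k| := by rw [h1, abs_neg]
          _ ≤ ∑ k ∈ Finset.univ.erase i, |F i k * x k| :=
              Finset.abs_sum_le_sum_abs _ _
          _ ≤ ∑ k ∈ Finset.univ.erase i, |F i k| * m := by
              apply Finset.sum_le_sum; intro k _
              rw [abs_mul]
              exact mul_le_mul_of_nonneg_left (hmax k) (abs_nonneg _)
          _ = (∑ k ∈ Finset.univ.erase i, |F i k|) * m := by rw [Finset.sum_mul]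
          _ ≤ μ * F i i * m := mul_le_mul_of_nonneg_right (hμ i) hm0
      have hFii := hdiag i
      nlinarith
    have hkj : ∀ k, k ≠ j → |x k| ≤ |x j| := by
      by_cases h0 : i0 = j
      · intro k hk
        have := hkey k hk
        have hμm : μ * m ≤ m := by nlinarith
        calc |x k| ≤ μ * m := hkey k hk
          _ ≤ m := hμm
          _ = |x j| := by rw [hm, h0]
      · have hle : m ≤ μ * m := by rw [hm]; exact hkey i0 h0
        have hm00 : m = 0 := by nlinarith
        intro k hk
        have := hmax k
        have := abs_nonneg (x j)
        linarith
    have h1 : (1:ℝ) = F j j * x j + ∑ k ∈ Finset.univ.erase j, F j k * x k := by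
      have h := hrow j
      rw [if_pos rfl, ← Finset.add_sum_erase _ _ (Finset.mem_univ j)] at h
      linarith
    have h2 : |∑ k ∈ Finset.univ.erase j, F j k * x k| ≤ μ * F j j * |x j| := by
      calc |∑ k ∈ Finset.univ.erase j, F j k * x k|
          ≤ ∑ k ∈ Finset.univ.erase j, |F j k * x k| :=
            Finset.abs_sum_le_sum_abs _ _
        _ ≤ ∑ k ∈ Finset.univ.erase j, |F j k| * |x j| := by
            apply Finset.sum_le_sum; intro k hk
            rw [abs_mul]
            exact mul_le_mul_of_nonneg_left (hkj k (Finset.ne_of_mem_erase hk))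
              (abs_nonneg _)
        _ = (∑ k ∈ Finset.univ.erase j, |F j k|) * |x j| := by rw [Finset.sum_mul]
        _ ≤ μ * F j j * |x j| :=
            mul_le_mul_of_nonneg_right (hμ j) (abs_nonneg _)
    have h3 : F j j * x j - μ * F j j * |x j| ≤ 1 := by
      have := neg_abs_le (∑ k ∈ Finset.univ.erase j, F j k * x k)
      linarith
    show x j ≤ 1 / (F j j * (1 - μ))
    rcases le_or_gt (x j) 0 with hxj | hxj
    · have : 0 < 1 / (F j j * (1 - μ)) := by positivity
      linarith
    · rw [le_div_iff₀ hden]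
      rw [abs_of_pos hxj] at h3
      nlinarith
  · rw [Matrix.nonsing_inv_apply_not_isUnit _ hu]
    simp only [Matrix.zero_apply]
    positivity
end

section
/- Let S be a K×K symmetric positive semidefinite matrix with entries bounded in absolute value by ρ. Then there exists λ₀ > 0 (e.g., λ₀ = 2K²ρ + 1) such that for all λ ≥ λ₀, the matrix (S + λI)⁻¹ is strictly diagonally dominant, and consequently (S + λI)⁻¹𝟏 has all positive entries. -/
open Matrix Finset

theorem stmt14 {K : ℕ} (S : Matrix (Fin K) (Fin K) ℝ) (hpsd : S.PosSemidef)
    (ρ : ℝ) (hρ : ∀ i j, |S i j| ≤ ρ) :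
    ∃ lam₀ : ℝ, 0 < lam₀ ∧ ∀ lam : ℝ, lam₀ ≤ lam →
      SDD (S + lam • (1 : Matrix (Fin K) (Fin K) ℝ))⁻¹ ∧
      ∀ i, 0 < ((S + lam • (1 : Matrix (Fin K) (Fin K) ℝ))⁻¹ *ᵥ (fun _ => (1 : ℝ))) i := by
  refine ⟨2 * (K:ℝ)^2 * |ρ| + 1, by positivity, fun lam hlam => ?_⟩
  have hK2 : (0:ℝ) ≤ 2 * (K:ℝ)^2 * |ρ| := by positivity
  have hlam1 : (1:ℝ) ≤ lam := by linarith
  have hlam0 : (0:ℝ) < lam := by linarith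
  have hlamBig : (K:ℝ)^2 * ρ < lam := by
    have : (K:ℝ)^2 * ρ ≤ (K:ℝ)^2 * |ρ| := by
      have := le_abs_self ρ
      nlinarith [sq_nonneg (K:ℝ)]
    linarith
  set F := S + lam • (1 : Matrix (Fin K) (Fin K) ℝ) with hFdef
  have hstar : ∀ x : Fin K → ℝ, star x = x := fun x => funext fun i => rfl
  have hquad : ∀ x : Fin K → ℝ, x ⬝ᵥ F *ᵥ x = x ⬝ᵥ S *ᵥ x + lam * (x ⬝ᵥ x) := by
    intro x
    simp [hFdef, add_mulVec, smul_mulVec, one_mulVec, dotProduct_add, dotProduct_smul,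
      smul_eq_mul]
  have hSnn : ∀ x : Fin K → ℝ, 0 ≤ x ⬝ᵥ S *ᵥ x := fun x => by
    have := hpsd.dotProduct_mulVec_nonneg x; rwa [hstar] at this
  have hFpd : F.PosDef := by
    refine Matrix.PosDef.of_dotProduct_mulVec_pos ?_ (fun x hx => ?_)
    · have hS : Sᵀ = S := by simpa using hpsd.1.eq
      simp [hFdef, Matrix.IsHermitian, conjTranspose_add, conjTranspose_smul,
        conjTranspose_one, hS]
    · rw [hstar, hquad]
      have h0 : 0 < x ⬝ᵥ x := by
        have := dotProduct_star_self_pos_iff.mpr hx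
        rwa [hstar] at this
      nlinarith [hSnn x]
  set G := F⁻¹ with hGdef
  have hdet : IsUnit F.det := isUnit_iff_ne_zero.mpr hFpd.det_pos.ne'
  have hFG : F * G = 1 := mul_nonsing_inv F hdet
  have hGF : G * F = 1 := nonsing_inv_mul F hdet
  have hGpd : G.PosDef := hFpd.inv
  have hGsym : ∀ i j, G j i = G i j := by
    intro i j
    have := congrFun (congrFun hGpd.1 i) j
    simpa [conjTranspose_apply] using this
  have hGdiagpos : ∀ i, 0 < G i i := by
    intro i
    have hne : (Pi.single i 1 : Fin K → ℝ) ≠ 0 := by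
      intro h
      have := congrFun h i
      simp at this
    have h := hGpd.dotProduct_mulVec_pos (x := Pi.single i 1) hne
    rw [hstar] at h
    simpa [mulVec_single, single_dotProduct] using h
  have hGdiag_le : ∀ i, G i i ≤ 1 / lam := by
    intro i
    set y := G *ᵥ Pi.single i 1 with hy
    have hyi : y i = G i i := by simp [hy, mulVec_single]
    have h1 : F *ᵥ y = Pi.single i 1 := by
      rw [hy, mulVec_mulVec, hFG, one_mulVec]
    have h2 : y ⬝ᵥ F *ᵥ y = G i i := by rw [h1, dotProduct_single, hyi, mul_one]
    have h3 : y i * y i ≤ y ⬝ᵥ y := by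
      have := Finset.single_le_sum (f := fun j => y j * y j)
        (fun j _ => mul_self_nonneg _) (mem_univ i)
      simpa [dotProduct] using this
    have h5 := hquad y
    rw [h2] at h5
    have h6 : lam * (G i i * G i i) ≤ G i i := by
      rw [hyi] at h3
      nlinarith [hSnn y]
    rw [le_div_iff₀ hlam0]
    nlinarith [hGdiagpos i]
  have hGentry : ∀ i j, |G i j| ≤ 1 / lam := by
    intro i j
    by_cases hij : i = j
    · subst hij
      rw [abs_of_pos (hGdiagpos i)]
      exact hGdiag_le i
    · have key : ∀ t : ℝ, 0 ≤ G i i + 2 * t * G i j + t^2 * G j j := by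
        intro t
        set x : Fin K → ℝ := (Pi.single i 1 : Fin K → ℝ) + t • (Pi.single j 1 : Fin K → ℝ) with hx
        have h := hGpd.posSemidef.dotProduct_mulVec_nonneg x
        rw [hstar] at h
        have hc : x ⬝ᵥ G *ᵥ x
            = G i i + 2 * t * G i j + t^2 * G j j := by
          simp [hx, mulVec_add, mulVec_smul, mulVec_single, dotProduct_add, dotProduct_smul,
            add_dotProduct, smul_dotProduct, single_dotProduct, smul_eq_mul, Pi.add_apply,
            Pi.smul_apply]
          rw [hGsym i j]
          ring
        rw [hc] at h
        exact h
      have h1 := key 1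
      have h2 := key (-1)
      have habs : |G i j| ≤ (G i i + G j j) / 2 := by
        rw [abs_le]
        constructor <;> nlinarith
      have hi := hGdiag_le i
      have hj := hGdiag_le j
      linarith
  have hGS : ∀ i j, |(G * S) i j| ≤ (K:ℝ) * ρ / lam := by
    intro i j
    have hρ0 : 0 ≤ ρ := le_trans (abs_nonneg _) (hρ i j)
    calc |(G*S) i j| = |∑ k, G i k * S k j| := by rw [mul_apply]
      _ ≤ ∑ k, |G i k * S k j| := Finset.abs_sum_le_sum_abs _ _
      _ ≤ ∑ _k : Fin K, (1/lam) * ρ := Finset.sum_le_sum fun k _ => by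
            rw [abs_mul]
            exact mul_le_mul (hGentry i k) (hρ k j) (abs_nonneg _) (by positivity)
      _ = (K:ℝ) * ρ / lam := by
            simp [Finset.sum_const, Finset.card_univ]
            ring
  have hform : ∀ i j, G i j = ((1 : Matrix (Fin K) (Fin K) ℝ) i j - (G * S) i j) / lam := by
    intro i j
    have h : G * S + lam • G = 1 := by
      have h0 : G * F = 1 := hGF
      rw [hFdef, Matrix.mul_add, Matrix.mul_smul, Matrix.mul_one] at h0
      exact h0
    have h2 := congrFun (congrFun h i) j
    simp only [Matrix.add_apply, Matrix.smul_apply, smul_eq_mul] at h2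
    field_simp
    linarith
  -- cleared-denominator entry bounds
  have hoff : ∀ i j, i ≠ j → lam ^ 2 * |G i j| ≤ (K:ℝ) * ρ := by
    intro i j hij
    have h := hGS i j
    have he : |G i j| = |(G * S) i j| / lam := by
      rw [hform i j, one_apply_ne hij, zero_sub, abs_div, abs_neg, abs_of_pos hlam0]
    rw [he]
    have h2 : lam ^ 2 * (|(G * S) i j| / lam) = lam * |(G * S) i j| := by
      field_simp
    rw [h2]
    calc lam * |(G * S) i j| ≤ lam * ((K:ℝ) * ρ / lam) :=
          mul_le_mul_of_nonneg_left h hlam0.le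
      _ = (K:ℝ) * ρ := by field_simp
  have hdiaglb : ∀ i, lam - (K:ℝ) * ρ ≤ lam ^ 2 * G i i := by
    intro i
    rw [hform i i, one_apply_eq]
    have h := hGS i i
    have h2 : (G*S) i i ≤ (K:ℝ) * ρ / lam := le_trans (le_abs_self _) h
    have : lam ^ 2 * ((1 - (G*S) i i) / lam) = lam * (1 - (G*S) i i) := by
      field_simp
    rw [this]
    have := mul_le_mul_of_nonneg_left h2 hlam0.le
    rw [mul_div_cancel₀ _ hlam0.ne'] at this
    nlinarith
  have hsdd : SDD G := by
    intro i
    have hρ0 : 0 ≤ ρ := le_trans (abs_nonneg _) (hρ i i)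
    have hK1 : 1 ≤ K := Nat.one_le_iff_ne_zero.mpr (by
      rintro rfl; exact absurd i.2 (by simp))
    have hcard : ((Finset.univ.erase i).card : ℝ) = (K:ℝ) - 1 := by
      rw [Finset.card_erase_of_mem (mem_univ i), Finset.card_univ, Fintype.card_fin]
      push_cast [Nat.cast_sub hK1]
      ring
    have hsum : lam ^ 2 * ∑ j ∈ Finset.univ.erase i, |G i j| ≤ ((K:ℝ) - 1) * ((K:ℝ) * ρ) := by
      rw [Finset.mul_sum]
      calc ∑ j ∈ Finset.univ.erase i, lam ^ 2 * |G i j|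
          ≤ ∑ _j ∈ Finset.univ.erase i, (K:ℝ) * ρ :=
            Finset.sum_le_sum fun j hj => hoff i j (Finset.ne_of_mem_erase hj).symm
        _ = ((K:ℝ) - 1) * ((K:ℝ) * ρ) := by
            rw [Finset.sum_const, nsmul_eq_mul, hcard]
    have hkey : ((K:ℝ) - 1) * ((K:ℝ) * ρ) < lam - (K:ℝ) * ρ := by nlinarith
    have hfinal : lam ^ 2 * ∑ j ∈ Finset.univ.erase i, |G i j| < lam ^ 2 * G i i := by
      calc lam ^ 2 * ∑ j ∈ Finset.univ.erase i, |G i j| ≤ ((K:ℝ) - 1) * ((K:ℝ) * ρ) := hsum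
        _ < lam - (K:ℝ) * ρ := hkey
        _ ≤ lam ^ 2 * G i i := hdiaglb i
    rw [abs_of_pos (hGdiagpos i)]
    exact lt_of_mul_lt_mul_left hfinal (by positivity)
  refine ⟨hsdd, fun i => ?_⟩
  have h1 : (G *ᵥ fun _ => (1:ℝ)) i = ∑ j, G i j := by
    simp [mulVec, dotProduct]
  rw [h1, ← Finset.add_sum_erase _ _ (mem_univ i)]
  have h2 : -∑ j ∈ Finset.univ.erase i, |G i j| ≤ ∑ j ∈ Finset.univ.erase i, G i j := by
    rw [← Finset.sum_neg_distrib]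
    exact Finset.sum_le_sum fun j _ => neg_abs_le _
  have h3 := hsdd i
  rw [abs_of_pos (hGdiagpos i)] at h3
  linarith
end
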